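/- Let k be a positive integer, m a nonnegative integer, and for \(a \in \mathbb{R}_{>0}\) set \(P^m(a) = \sum_{j=0}^{m}(-4\pi)^j\binom{m}{j}\frac{\Gamma(k+m)}{\Gamma(k+j)}a^{k/2+j}\). Then \(\int_0^{\infty} 2^{2m}P^m(a)P^m(a)e^{-4\pi a}\frac{da}{a} = 4^{-k+m}\pi^{-k}\Gamma(k+m)\Gamma(m+1)\). -/

import Mathlib

open Finset MeasureTheory

lemma altSumSucc (m : ℕ) (f : ℕ → ℤ) :
    ∑ i ∈ range (m+2), (-1:ℤ)^i * ((m+1).choose i) * f i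
      = ∑ i ∈ range (m+1), (-1:ℤ)^i * (m.choose i) * (f i - f (i+1)) := by
  have h1 : ∑ i ∈ range (m+2), (-1:ℤ)^i * ((m+1).choose i) * f i
      = (∑ i ∈ range (m+1), (-1:ℤ)^(i+1) * ((m+1).choose (i+1)) * f (i+1)) + f 0 := by
    rw [Finset.sum_range_succ' (fun i => (-1:ℤ)^i * ((m+1).choose i) * f i) (m+1)]
    simp
  rw [h1]
  have h2 : ∀ i, (-1:ℤ)^(i+1) * ((m+1).choose (i+1)) * f (i+1)
      = -((-1:ℤ)^i * (m.choose i) * f (i+1)) - (-1:ℤ)^i * (m.choose (i+1)) * f (i+1) := by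
    intro i
    rw [Nat.choose_succ_succ]
    push_cast
    ring
  simp_rw [h2]
  rw [Finset.sum_sub_distrib]
  have h3 : ∑ i ∈ range (m+1), (-1:ℤ)^i * (m.choose (i+1)) * f (i+1)
      = f 0 - ∑ i ∈ range (m+1), (-1:ℤ)^i * (m.choose i) * f i := by
    rw [Finset.sum_range_succ (fun i => (-1:ℤ)^i * (m.choose (i+1)) * f (i+1)) m,
      Finset.sum_range_succ' (fun i => (-1:ℤ)^i * (m.choose i) * f i) m]
    simp only [Nat.choose_succ_self, Nat.cast_zero, mul_zero, zero_mul, add_zero, pow_zero,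
      Nat.choose_zero_right, Nat.cast_one, one_mul, mul_one]
    rw [sub_add_eq_sub_sub, sub_right_comm, sub_self, zero_sub, ← Finset.sum_neg_distrib]
    exact Finset.sum_congr rfl fun i _ => by ring
  rw [h3]
  simp_rw [mul_sub]
  rw [Finset.sum_sub_distrib, Finset.sum_neg_distrib]
  ring

lemma Tlem : ∀ (m : ℕ), ∀ (kk j : ℕ), j ≤ m →
    ∑ i ∈ range (m+1), (-1:ℤ)^i * (m.choose i) * ((kk+i).ascFactorial j)
      = if j = m then (-1:ℤ)^m * m.factorial else 0 := by
  intro m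
  induction m with
  | zero =>
    intro kk j hj
    interval_cases j
    simp
  | succ m ih =>
    intro kk j hj
    rw [show m + 1 + 1 = m + 2 from rfl,
      altSumSucc m (fun i => ((kk+i).ascFactorial j : ℤ))]
    match j with
    | 0 => simp [Nat.ascFactorial_zero]
    | j' + 1 =>
      have hstep : ∀ i : ℕ, (((kk+i).ascFactorial (j'+1) : ℤ) - ((kk+(i+1)).ascFactorial (j'+1) : ℤ))
          = -((j':ℤ)+1) * (((kk+1)+i).ascFactorial j' : ℤ) := by
        intro i
        have e1 : (kk+i).ascFactorial (j'+1) = (kk+i) * ((kk+i+1).ascFactorial j') := by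
          rw [Nat.succ_ascFactorial (kk+i) j', ← Nat.ascFactorial_succ]
        have e2 : (kk+(i+1)).ascFactorial (j'+1) = (kk+i+1+j') * ((kk+i+1).ascFactorial j') := by
          rw [← Nat.add_assoc, Nat.ascFactorial_succ]
        rw [e1, e2]
        have : (kk+1)+i = kk+i+1 := by omega
        rw [this]
        push_cast
        ring
      simp_rw [hstep]
      have hsum : ∑ i ∈ range (m+1), (-1:ℤ)^i * (m.choose i) * (-((j':ℤ)+1) * (((kk+1)+i).ascFactorial j' : ℤ))
          = -((j':ℤ)+1) * ∑ i ∈ range (m+1), (-1:ℤ)^i * (m.choose i) * (((kk+1)+i).ascFactorial j' : ℤ) := by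
        rw [Finset.mul_sum]
        exact Finset.sum_congr rfl fun i _ => by ring
      rw [hsum, ih (kk+1) j' (by omega)]
      by_cases hjm : j' = m
      · subst hjm
        simp [pow_succ, Nat.factorial_succ]
        push_cast
        ring
      · have : ¬ (j' + 1 = m + 1) := by omega
        simp [hjm, this]

lemma keyS (k' m : ℕ) :
    ∑ i ∈ range (m+1), ∑ j ∈ range (m+1),
      (-1:ℝ)^(i+j) * (m.choose i) * (m.choose j) * ((k'+i+j).factorial : ℝ)
        / (((k'+i).factorial : ℝ) * ((k'+j).factorial : ℝ))
      = (m.factorial : ℝ) / ((k'+m).factorial : ℝ) := by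
  rw [Finset.sum_comm]
  have hinner : ∀ j ∈ range (m+1),
      ∑ i ∈ range (m+1), (-1:ℝ)^(i+j) * (m.choose i) * (m.choose j) * ((k'+i+j).factorial : ℝ)
        / (((k'+i).factorial : ℝ) * ((k'+j).factorial : ℝ))
      = ((-1:ℝ)^j * (m.choose j) / ((k'+j).factorial : ℝ)) *
          (if j = m then (-1:ℝ)^m * m.factorial else 0) := by
    intro j hj
    rw [Finset.mem_range] at hj
    have hT : (∑ i ∈ range (m+1), (-1:ℝ)^i * (m.choose i) * (((k'+1+i).ascFactorial j : ℕ) : ℝ))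
        = if j = m then (-1:ℝ)^m * (m.factorial : ℝ) else 0 := by
      have := Tlem m (k'+1) j (by omega)
      exact_mod_cast this
    rw [← hT, Finset.mul_sum]
    refine Finset.sum_congr rfl fun i _ => ?_
    have hfac : ((k'+i).factorial : ℝ) * ((k'+i+1).ascFactorial j : ℝ) = ((k'+i+j).factorial : ℝ) := by
      exact_mod_cast congrArg (Nat.cast (R := ℝ)) (Nat.factorial_mul_ascFactorial (k'+i) j)
    have h1 : ((k'+i).factorial : ℝ) ≠ 0 := by positivity
    have h2 : ((k'+j).factorial : ℝ) ≠ 0 := by positivity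
    have : (k'+1+i) = (k'+i+1) := by omega
    rw [← hfac, this]
    field_simp
    ring
  rw [Finset.sum_congr rfl hinner]
  simp only [mul_ite, mul_zero, Finset.sum_ite_eq' (range (m+1)) m, Finset.mem_range,
    lt_add_iff_pos_right, zero_lt_one, if_true]
  have h2 : ((k'+m).factorial : ℝ) ≠ 0 := by positivity
  field_simp
  ring_nf
  rw [pow_mul, ← pow_mul, mul_comm m 2, pow_mul, neg_one_sq, one_pow, mul_one]
  simp

lemma integrableAux {s r : ℝ} (hs : 0 < s) (hr : 0 < r) :
    MeasureTheory.IntegrableOn (fun a : ℝ => a ^ (s - 1) * Real.exp (-(r * a))) (Set.Ioi 0) := by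
  have h := integrableOn_rpow_mul_exp_neg_mul_rpow (s := s - 1) (p := 1)
    (by linarith) zero_lt_one hr
  refine h.congr_fun (fun x hx => ?_) measurableSet_Ioi
  beta_reduce
  rw [Real.rpow_one]
  ring_nf

/-- Norm of the weight `k+2m` vector:
`∫_0^∞ 2^{2m} P^m(a)² e^{-4πa} da/a = 4^{m-k} π^{-k} Γ(k+m) Γ(m+1)`. -/
theorem stmt7 (k m : ℕ) (hk : 1 ≤ k) (P : ℝ → ℝ)
    (hP : ∀ a : ℝ, P a = ∑ j ∈ Finset.range (m + 1),
        (-4 * Real.pi) ^ j * (m.choose j : ℝ) *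
          (Real.Gamma ((k : ℝ) + m) / Real.Gamma ((k : ℝ) + j)) *
          a ^ ((k : ℝ) / 2 + j)) :
    ∫ a in Set.Ioi (0 : ℝ), (2 : ℝ) ^ (2 * m) * P a * P a * Real.exp (-4 * Real.pi * a) / a
      = (4 : ℝ) ^ ((m : ℝ) - k) * Real.pi ^ (-(k : ℝ)) *
          Real.Gamma ((k : ℝ) + m) * Real.Gamma ((m : ℝ) + 1) := by
  obtain ⟨k', rfl⟩ : ∃ k', k = k' + 1 := ⟨k - 1, by omega⟩
  have hπ := Real.pi_pos
  have hr : (0:ℝ) < 4 * Real.pi := by positivity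
  set c : ℕ → ℝ := fun i => (-4 * Real.pi) ^ i * (m.choose i : ℝ) *
    (Real.Gamma (((k'+1:ℕ) : ℝ) + m) / Real.Gamma (((k'+1:ℕ) : ℝ) + i)) with hc
  -- Step A : pointwise identity on Ioi 0
  have hpt : ∀ a ∈ Set.Ioi (0:ℝ),
      (2 : ℝ) ^ (2 * m) * P a * P a * Real.exp (-4 * Real.pi * a) / a
      = ∑ i ∈ range (m+1), ∑ j ∈ range (m+1),
          (c i * c j * 4 ^ m) * (a ^ ((((k'+1:ℕ)) : ℝ) + i + j - 1) * Real.exp (-(4 * Real.pi * a))) := by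
    intro a ha
    rw [Set.mem_Ioi] at ha
    rw [hP a]
    simp_rw [Finset.mul_sum, Finset.sum_mul, Finset.sum_div]
    refine Finset.sum_congr rfl fun i _ => Finset.sum_congr rfl fun j _ => ?_
    have h1 : a ^ ((((k'+1:ℕ)) : ℝ)/2 + i) * a ^ ((((k'+1:ℕ)) : ℝ)/2 + j)
        = a ^ ((((k'+1:ℕ)) : ℝ) + i + j) := by
      rw [← Real.rpow_add ha]; congr 1; ring
    have h2 : a ^ ((((k'+1:ℕ)) : ℝ) + i + j - 1) = a ^ ((((k'+1:ℕ)) : ℝ) + i + j) / a := by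
      rw [Real.rpow_sub ha, Real.rpow_one]
    have h3 : (2:ℝ) ^ (2*m) = 4 ^ m := by rw [pow_mul]; norm_num
    have h4 : Real.exp (-4 * Real.pi * a) = Real.exp (-(4 * Real.pi * a)) := by
      congr 1; ring
    rw [h2, h3, h4, ← h1, hc]
    field_simp
  rw [MeasureTheory.setIntegral_congr_fun measurableSet_Ioi hpt]
  -- Step B : integrate term by term
  have hs0 : ∀ i j : ℕ, (0:ℝ) < (((k'+1:ℕ)) : ℝ) + i + j := by
    intro i j; push_cast; positivity
  have hint : ∀ i j : ℕ, MeasureTheory.IntegrableOn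
      (fun a : ℝ => (c i * c j * 4 ^ m) * (a ^ ((((k'+1:ℕ)) : ℝ) + i + j - 1) * Real.exp (-(4 * Real.pi * a))))
      (Set.Ioi 0) := fun i j => (integrableAux (hs0 i j) hr).const_mul _
  rw [MeasureTheory.integral_finset_sum _
    (fun i _ => MeasureTheory.integrable_finset_sum _ (fun j _ => hint i j))]
  rw [Finset.sum_congr rfl
    (fun i _ => MeasureTheory.integral_finset_sum _ (fun j _ => hint i j))]
  -- Step C : evaluate each integral
  have hval : ∀ i j : ℕ,
      (∫ a in Set.Ioi (0:ℝ), (c i * c j * 4 ^ m) * (a ^ ((((k'+1:ℕ)) : ℝ) + i + j - 1) * Real.exp (-(4 * Real.pi * a))))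
      = (c i * c j * 4 ^ m) * ((1 / (4 * Real.pi)) ^ ((((k'+1:ℕ)) : ℝ) + i + j) * Real.Gamma ((((k'+1:ℕ)) : ℝ) + i + j)) := by
    intro i j
    rw [MeasureTheory.integral_const_mul]
    congr 1
    exact Real.integral_rpow_mul_exp_neg_mul_Ioi (hs0 i j) hr
  simp_rw [hval]
  -- Step D : scalar computation
  have hΓ2 : ∀ i j : ℕ, Real.Gamma ((((k'+1:ℕ)) : ℝ) + i + j) = ((k'+i+j).factorial : ℝ) := by
    intro i j
    rw [show (((k'+1:ℕ)) : ℝ) + i + j = (((k'+i+j : ℕ)) : ℝ) + 1 by push_cast; ring,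
      Real.Gamma_nat_eq_factorial]
  have hΓ1 : ∀ i : ℕ, Real.Gamma ((((k'+1:ℕ)) : ℝ) + i) = ((k'+i).factorial : ℝ) := by
    intro i
    rw [show (((k'+1:ℕ)) : ℝ) + i = (((k'+i : ℕ)) : ℝ) + 1 by push_cast; ring,
      Real.Gamma_nat_eq_factorial]
  have hpow : ∀ i j : ℕ, (1 / (4 * Real.pi)) ^ ((((k'+1:ℕ)) : ℝ) + i + j)
      = (1 / (4 * Real.pi)) ^ (k'+1) * (1 / (4 * Real.pi)) ^ i * (1 / (4 * Real.pi)) ^ j := by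
    intro i j
    rw [show (((k'+1:ℕ)) : ℝ) + i + j = (((k'+1+i+j : ℕ)) : ℝ) by push_cast; ring,
      Real.rpow_natCast, pow_add, pow_add]
  set K : ℝ := 4 ^ m * (1 / (4 * Real.pi)) ^ (k'+1) * (((k'+m).factorial : ℝ))^2 with hK
  have hterm : ∀ i ∈ range (m+1), ∀ j ∈ range (m+1),
      c i * c j * 4 ^ m * ((1 / (4 * Real.pi)) ^ ((((k'+1:ℕ)) : ℝ) + i + j)
          * Real.Gamma ((((k'+1:ℕ)) : ℝ) + i + j))
      = K * ((-1:ℝ)^(i+j) * (m.choose i : ℝ) * (m.choose j : ℝ) * ((k'+i+j).factorial : ℝ)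
          / (((k'+i).factorial : ℝ) * ((k'+j).factorial : ℝ))) := by
    intro i _ j _
    rw [hΓ2, hpow, hc, hK]
    simp only [hΓ1]
    have e1 : ∀ n : ℕ, ((-4) * Real.pi) ^ n = (-1:ℝ)^n * (4 * Real.pi) ^ n := by
      intro n; rw [show (-4:ℝ) * Real.pi = -1 * (4 * Real.pi) by ring, mul_pow]
    have e2 : ∀ n : ℕ, (1 / (4 * Real.pi)) ^ n = ((4 * Real.pi) ^ n)⁻¹ := by
      intro n; rw [one_div, inv_pow]
    rw [e1 i, e1 j, e2 i, e2 j, pow_add]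
    have h1 : ((k'+i).factorial : ℝ) ≠ 0 := by positivity
    have h2 : ((k'+j).factorial : ℝ) ≠ 0 := by positivity
    have h3 : ((4 * Real.pi) ^ i : ℝ) ≠ 0 := by positivity
    have h4 : ((4 * Real.pi) ^ j : ℝ) ≠ 0 := by positivity
    field_simp
    ring
  rw [Finset.sum_congr rfl (fun i hi => Finset.sum_congr rfl (fun j hj => hterm i hi j hj))]
  simp_rw [← Finset.mul_sum]
  rw [keyS k' m]
  -- final constants
  rw [hΓ1 m, show ((m:ℝ) + 1) = (((m:ℕ)):ℝ) + 1 by push_cast; ring, Real.Gamma_nat_eq_factorial]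
  have h4k : (4:ℝ) ^ ((m:ℝ) - (((k'+1:ℕ)):ℝ)) = 4 ^ m / 4 ^ (k'+1) := by
    rw [Real.rpow_sub (by norm_num), Real.rpow_natCast, Real.rpow_natCast]
  have hπk : Real.pi ^ (-((((k'+1:ℕ)):ℝ))) = (Real.pi ^ (k'+1))⁻¹ := by
    rw [Real.rpow_neg hπ.le, Real.rpow_natCast]
  rw [h4k, hπk, hK]
  have h1 : ((k'+m).factorial : ℝ) ≠ 0 := by positivity
  have h2 : ((4:ℝ) * Real.pi) ^ (k'+1) ≠ 0 := by positivity
  have h3 : (Real.pi : ℝ) ^ (k'+1) ≠ 0 := by positivity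
  have h4 : ((4:ℝ)) ^ (k'+1) ≠ 0 := by positivity
  rw [div_pow, one_pow, mul_pow]
  field_simp
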